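/- Let G(s) = [G1(s) G2(s)] be a nondegenerate characteristic matrix partitioned into two column blocks. Then R[G] ≥ min over matrices M of R[G1(s) + G2(s)M] + (column rank of G2(s)). -/

import Mathlib

open scoped BigOperators

noncomputable def tRank (F : Type) [Field F] {I J K : Type} [Fintype I] [Fintype J] [Fintype K]
    (A : I → J → K → F) : ℕ :=
  sInf {m | ∃ x : Fin m → I → F, ∃ y : Fin m → J → F, ∃ z : Fin m → K → F,
    ∀ i j k, A i j k = ∑ t, x t i * y t j * z t k}

noncomputable def charMatrix {F : Type} [Field F] {I J K : Type} [Fintype K]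
    (A : I → J → K → F) : Matrix I J (MvPolynomial K F) :=
  Matrix.of fun i j => ∑ k, MvPolynomial.X k * MvPolynomial.C (A i j k)

noncomputable def colRank (F : Type) [Field F] {I J K : Type} [Fintype I] [Fintype J] [Fintype K]
    (A : I → J → K → F) : ℕ :=
  ((charMatrix A).map
    (algebraMap (MvPolynomial K F) (FractionRing (MvPolynomial K F)))).rank

noncomputable def rowRank (F : Type) [Field F] {I J K : Type} [Fintype I] [Fintype J] [Fintype K]
    (A : I → J → K → F) : ℕ :=
  (((charMatrix A).transpose).map
    (algebraMap (MvPolynomial K F) (FractionRing (MvPolynomial K F)))).rank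

/-- A tensor is nondegenerate if no nontrivial linear combination of its slices vanishes
and its characteristic matrix has full row and column rank. -/
def Nondeg (F : Type) [Field F] {I J K : Type} [Fintype I] [Fintype J] [Fintype K]
    (A : I → J → K → F) : Prop :=
  (∀ c : K → F, (∀ i j, ∑ k, c k * A i j k = 0) → c = 0) ∧
  rowRank F A = Fintype.card I ∧ colRank F A = Fintype.card J

lemma tset_nonempty (F : Type) [Field F] {I J K : Type} [Fintype I] [Fintype J] [Fintype K]
    [DecidableEq I] [DecidableEq J] (A : I → J → K → F) :
    {m | ∃ x : Fin m → I → F, ∃ y : Fin m → J → F, ∃ z : Fin m → K → F,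
      ∀ i j k, A i j k = ∑ t, x t i * y t j * z t k}.Nonempty := by
  classical
  refine ⟨Fintype.card (I × J), ?_⟩
  set e := (Fintype.equivFin (I × J)).symm with he
  refine ⟨fun t i => if (e t).1 = i then 1 else 0,
          fun t j => if (e t).2 = j then 1 else 0,
          fun t k => A (e t).1 (e t).2 k, ?_⟩
  intro i j k
  rw [Equiv.sum_comp e (fun p : I × J =>
    (if p.1 = i then (1:F) else 0) * (if p.2 = j then 1 else 0) * A p.1 p.2 k)]
  rw [Fintype.sum_prod_type]
  simp [Finset.sum_ite_eq, Finset.sum_ite_eq']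

lemma mulVec_surj_of_li {F : Type} [Field F] {T n : Type} [Fintype T] [Fintype n] [DecidableEq n]
    (W : Matrix T n F) (h : LinearIndependent F (fun t => W t)) :
    Function.Surjective W.mulVec := by
  have hr : W.rank = Fintype.card T := h.rank_matrix
  have htop : LinearMap.range W.mulVecLin = ⊤ := by
    apply Submodule.eq_top_of_finrank_eq
    rw [show Module.finrank F ↥(LinearMap.range W.mulVecLin) = W.rank from rfl, hr,
      Module.finrank_fintype_fun_eq_card]
  intro w
  obtain ⟨v, hv⟩ := LinearMap.range_eq_top.mp htop w
  exact ⟨v, hv⟩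

lemma exists_indep_rows {K : Type} [Field K] {r n : ℕ} (B : Matrix (Fin r) (Fin n) K) :
    ∃ T : Finset (Fin r), T.card = B.rank ∧ LinearIndependent K (fun t : T => B t) := by
  classical
  obtain ⟨s, hs_sub, hs_span, hs_li⟩ := exists_linearIndependent K (Set.range fun t => B t)
  have hfin : s.Finite := (Set.finite_range _).subset hs_sub
  haveI := hfin.fintype
  have hcard : s.toFinset.card = B.rank := by
    rw [B.rank_eq_finrank_span_row, show Set.range B.row = Set.range fun t => B t from rfl, ← hs_span, finrank_span_set_eq_card hs_li]
  have hg : ∀ v : s, ∃ t : Fin r, B t = (v : Fin n → K) := fun v => hs_sub v.2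
  choose g hgB using hg
  have hginj : Function.Injective g := by
    intro v1 v2 h12
    apply Subtype.ext
    rw [← hgB v1, ← hgB v2, h12]
  refine ⟨Finset.image g Finset.univ, ?_, ?_⟩
  · rw [Finset.card_image_of_injective _ hginj, Finset.card_univ, ← Set.toFinset_card, hcard]
  · have hmem : ∀ t : (Finset.image g Finset.univ : Finset (Fin r)), B t ∈ s := by
      rintro ⟨t, ht⟩
      obtain ⟨v, -, hv⟩ := Finset.mem_image.mp ht
      simpa [← hv, hgB v] using v.2
    have := hs_li.comp (fun t : (Finset.image g Finset.univ : Finset (Fin r)) =>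
        (⟨B t, hmem t⟩ : s)) ?_
    · exact this
    · intro t1 t2 h12
      obtain ⟨v1, -, hv1⟩ := Finset.mem_image.mp t1.2
      obtain ⟨v2, -, hv2⟩ := Finset.mem_image.mp t2.2
      have hb : B t1 = B t2 := congrArg Subtype.val h12
      apply Subtype.ext
      rw [← hv1, ← hv2]
      have hvv : v1 = v2 := by
        apply Subtype.ext
        rw [← hgB v1, ← hgB v2, hv1, hv2, hb]
      rw [hvv]

theorem partitioning_column_blocks (F : Type) [Field F] {a b b' c : ℕ}
    (G1 : Fin a → Fin b → Fin c → F) (G2 : Fin a → Fin b' → Fin c → F)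
    (hG : Nondeg F (fun (i : Fin a) (j : Fin (b + b')) (k : Fin c) =>
      Fin.addCases (fun j1 => G1 i j1 k) (fun j2 => G2 i j2 k) j)) :
    sInf (Set.range fun M : Fin b' → Fin b → F =>
        tRank F (fun i j k => G1 i j k + ∑ j', G2 i j' k * M j' j)) +
      colRank F G2 ≤
    tRank F (fun (i : Fin a) (j : Fin (b + b')) (k : Fin c) =>
      Fin.addCases (fun j1 => G1 i j1 k) (fun j2 => G2 i j2 k) j) := by
  classical
  set G : Fin a → Fin (b + b') → Fin c → F := fun (i : Fin a) (j : Fin (b + b')) (k : Fin c) =>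
      Fin.addCases (fun j1 => G1 i j1 k) (fun j2 => G2 i j2 k) j with hGdef
  set r := tRank F G with hrdef
  obtain ⟨x, y, z, hdec⟩ : ∃ x : Fin r → Fin a → F, ∃ y : Fin r → Fin (b + b') → F,
      ∃ z : Fin r → Fin c → F, ∀ i j k, G i j k = ∑ t, x t i * y t j * z t k :=
    Nat.sInf_mem (tset_nonempty F G)
  set Y1 : Fin r → Fin b → F := fun t j => y t (Fin.castAdd b' j) with hY1
  set Y2 : Fin r → Fin b' → F := fun t j => y t (Fin.natAdd b j) with hY2
  have hd1 : ∀ i j k, G1 i j k = ∑ t, x t i * Y1 t j * z t k := by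
    intro i j k
    have := hdec i (Fin.castAdd b' j) k
    simpa [hGdef] using this
  have hd2 : ∀ i j' k, G2 i j' k = ∑ t, x t i * Y2 t j' * z t k := by
    intro i j' k
    have := hdec i (Fin.natAdd b j') k
    simpa [hGdef] using this
  set K' := FractionRing (MvPolynomial (Fin c) F) with hK'
  set algK := algebraMap (MvPolynomial (Fin c) F) K' with halgK
  set f0 : F →+* K' := algK.comp (MvPolynomial.C) with hf0
  have f0inj : Function.Injective f0 :=
    (IsFractionRing.injective (MvPolynomial (Fin c) F) K').comp (MvPolynomial.C_injective _ _)
  set BB : Matrix (Fin r) (Fin b') K' := Matrix.of fun t j => f0 (Y2 t j) with hBB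
  -- Step C : colRank F G2 ≤ BB.rank
  have hfac : (charMatrix G2).map algK =
      (Matrix.of fun i t => f0 (x t i) * ∑ k, algK (MvPolynomial.X k) * f0 (z t k)) * BB := by
    ext i j
    rw [Matrix.mul_apply]
    calc ((charMatrix G2).map algK) i j
        = ∑ k, algK (MvPolynomial.X k) * f0 (G2 i j k) := by
          simp [charMatrix, Matrix.map_apply, map_sum, map_mul, hf0]
      _ = ∑ k, ∑ t, algK (MvPolynomial.X k) * (f0 (x t i) * f0 (Y2 t j) * f0 (z t k)) := by
          refine Finset.sum_congr rfl fun k _ => ?_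
          rw [hd2 i j k, map_sum, Finset.mul_sum]
          refine Finset.sum_congr rfl fun t _ => ?_
          rw [map_mul, map_mul]
      _ = ∑ t, (Matrix.of fun i t => f0 (x t i) * ∑ k, algK (MvPolynomial.X k) * f0 (z t k)) i t
            * BB t j := by
          rw [Finset.sum_comm]
          refine Finset.sum_congr rfl fun t _ => ?_
          simp only [Matrix.of_apply, hBB, Finset.mul_sum, Finset.sum_mul]
          refine Finset.sum_congr rfl fun k _ => by ring
  have hcolle : colRank F G2 ≤ BB.rank := by
    have : colRank F G2 = ((charMatrix G2).map algK).rank := rfl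
    rw [this, hfac]
    exact Matrix.rank_mul_le_right _ _
  -- Step A : select rows and build M
  obtain ⟨T, hTcard, hliK⟩ := exists_indep_rows BB
  have hliF : LinearIndependent F (fun t : T => Y2 t) := by
    rw [Fintype.linearIndependent_iff]
    intro cc hcc t
    have h0 : ∑ t : T, f0 (cc t) • BB t = 0 := by
      funext j
      have := congrFun hcc j
      simp only [Finset.sum_apply, Pi.smul_apply, smul_eq_mul, Pi.zero_apply] at this ⊢
      rw [← map_zero f0, ← this, map_sum]
      refine Finset.sum_congr rfl fun t _ => ?_
      rw [map_mul]
      rfl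
    have := Fintype.linearIndependent_iff.mp hliK (fun t => f0 (cc t)) h0 t
    exact f0inj (by rw [this, map_zero])
  have hsurj : Function.Surjective (Matrix.of fun (t : T) j => Y2 t j).mulVec :=
    mulVec_surj_of_li _ hliF
  choose v hv using fun j : Fin b => hsurj (fun t : T => -(Y1 t j))
  set M : Fin b' → Fin b → F := fun j' j => v j j' with hM'
  have hM : ∀ t ∈ T, ∀ j, Y1 t j + ∑ j', Y2 t j' * M j' j = 0 := by
    intro t ht j
    have := congrFun (hv j) ⟨t, ht⟩
    simp only [Matrix.mulVec, dotProduct, Matrix.of_apply] at this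
    rw [show (∑ j', Y2 t j' * M j' j) = -(Y1 t j) from this]
    ring
  -- Step B : decomposition of G1 + G2 M with Tᶜ.card terms
  set H : Fin a → Fin b → Fin c → F := fun i j k => G1 i j k + ∑ j', G2 i j' k * M j' j with hH
  have hmem : Tᶜ.card ∈ {m | ∃ x' : Fin m → Fin a → F, ∃ y' : Fin m → Fin b → F,
      ∃ z' : Fin m → Fin c → F, ∀ i j k, H i j k = ∑ t, x' t i * y' t j * z' t k} := by
    set e := Tᶜ.equivFin.symm with he
    refine ⟨fun t i => x (e t) i,
            fun t j => Y1 (e t) j + ∑ j', Y2 (e t) j' * M j' j,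
            fun t k => z (e t) k, ?_⟩
    intro i j k
    have step1 : (∑ t, x ↑(e t) i * (Y1 ↑(e t) j + ∑ j', Y2 ↑(e t) j' * M j' j) * z ↑(e t) k)
        = ∑ u : ↥(Tᶜ), x ↑u i * (Y1 ↑u j + ∑ j', Y2 ↑u j' * M j' j) * z ↑u k :=
      Equiv.sum_comp e (fun u : ↥(Tᶜ) =>
        x ↑u i * (Y1 ↑u j + ∑ j', Y2 ↑u j' * M j' j) * z ↑u k)
    have step2 : (∑ u : ↥(Tᶜ), x ↑u i * (Y1 ↑u j + ∑ j', Y2 ↑u j' * M j' j) * z ↑u k)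
        = ∑ t ∈ Tᶜ, x t i * (Y1 t j + ∑ j', Y2 t j' * M j' j) * z t k :=
      Finset.sum_coe_sort Tᶜ (fun t => x t i * (Y1 t j + ∑ j', Y2 t j' * M j' j) * z t k)
    have step3 : (∑ t ∈ Tᶜ, x t i * (Y1 t j + ∑ j', Y2 t j' * M j' j) * z t k)
        = ∑ t : Fin r, x t i * (Y1 t j + ∑ j', Y2 t j' * M j' j) * z t k := by
      refine Finset.sum_subset (Finset.subset_univ _) ?_
      intro t _ htn
      have ht : t ∈ T := by simpa using htn
      rw [hM t ht j, mul_zero, zero_mul]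
    have step4 : (∑ t : Fin r, x t i * (Y1 t j + ∑ j', Y2 t j' * M j' j) * z t k)
        = H i j k := by
      calc (∑ t : Fin r, x t i * (Y1 t j + ∑ j', Y2 t j' * M j' j) * z t k)
          = ∑ t : Fin r, (x t i * Y1 t j * z t k
              + ∑ j', x t i * Y2 t j' * z t k * M j' j) := by
            refine Finset.sum_congr rfl fun t _ => ?_
            rw [mul_add, add_mul, Finset.mul_sum, Finset.sum_mul]
            congr 1
            exact Finset.sum_congr rfl fun j' _ => by ring
        _ = G1 i j k + ∑ j', G2 i j' k * M j' j := by
            rw [Finset.sum_add_distrib, Finset.sum_comm]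
            congr 1
            · exact (hd1 i j k).symm
            · refine Finset.sum_congr rfl fun j' _ => ?_
              rw [← Finset.sum_mul, ← hd2 i j' k]
        _ = H i j k := rfl
    rw [step1, step2, step3, step4]
  have h2 : tRank F H ≤ Tᶜ.card := Nat.sInf_le hmem
  have h1 : sInf (Set.range fun M : Fin b' → Fin b → F =>
      tRank F (fun i j k => G1 i j k + ∑ j', G2 i j' k * M j' j)) ≤ tRank F H :=
    Nat.sInf_le ⟨M, rfl⟩
  have h3 : colRank F G2 ≤ T.card := by rw [hTcard]; exact hcolle
  have h4 : Tᶜ.card = r - T.card := by rw [Finset.card_compl, Fintype.card_fin]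
  have h5 : T.card ≤ r := by
    have := Finset.card_le_univ T
    simpa using this
  calc sInf (Set.range fun M : Fin b' → Fin b → F =>
        tRank F (fun i j k => G1 i j k + ∑ j', G2 i j' k * M j' j)) + colRank F G2
      ≤ Tᶜ.card + T.card := add_le_add (h1.trans h2) h3
    _ = r := by rw [h4]; exact Nat.sub_add_cancel h5
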